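/- Let ξ be a real irrational number and let α, β be real numbers with 0 < α < 1 and β > 1. Assume there exist integer sequences (u_n)_{n≥1} and (v_n)_{n≥1} such that lim_{n→∞} |u_n ξ − v_n|^{1/n} = α and limsup_{n→∞} |u_n|^{1/n} ≤ β. Then the irrationality exponent satisfies μ(ξ) ≤ 1 − (log β)/(log α). -/

import Mathlib

open Filter Topology

/-- The irrationality exponent of a real number, as an extended real:
the infimum of all real `μ` such that `|ξ - p/q| > 1/q^μ` for all integers `p, q`
with `q` sufficiently large (`⊤` if no such real `μ` exists). -/
noncomputable def irrationalityExponent (ξ : ℝ) : EReal :=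
  sInf {x : EReal | ∃ μ : ℝ, x = (μ : EReal) ∧
    ∀ᶠ q : ℕ in atTop, ∀ p : ℤ, |ξ - (p : ℝ) / (q : ℝ)| > 1 / (q : ℝ) ^ μ}

set_option maxHeartbeats 1000000 in
theorem irrationality_exponent_le_of_geometric (ξ : ℝ) (hξ : Irrational ξ)
    (α β : ℝ) (hα0 : 0 < α) (hα1 : α < 1) (hβ : 1 < β)
    (u v : ℕ → ℤ)
    (hlim : Tendsto (fun n => |(u n : ℝ) * ξ - (v n : ℝ)| ^ (1 / (n : ℝ))) atTop (𝓝 α))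
    (hsup : limsup (fun n => ((|(u n : ℝ)| ^ (1 / (n : ℝ)) : ℝ) : EReal)) atTop ≤ (β : EReal)) :
    irrationalityExponent ξ ≤ ((1 - Real.log β / Real.log α : ℝ) : EReal) := by
  set μ₀ : ℝ := 1 - Real.log β / Real.log α with hμ₀def
  have hlogα : Real.log α < 0 := Real.log_neg hα0 hα1
  have hlogβ : 0 < Real.log β := Real.log_pos hβ
  -- key claim
  have key : ∀ μ : ℝ, μ₀ < μ →
      ∀ᶠ q : ℕ in atTop, ∀ p : ℤ, |ξ - (p : ℝ) / (q : ℝ)| > 1 / (q : ℝ) ^ μ := by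
    intro μ hμ
    -- choose ε
    obtain ⟨ε, hε0, hεα, hεα1, hs, ht⟩ : ∃ ε : ℝ, 0 < ε ∧ ε < α ∧ α + ε < 1 ∧
        Real.log (β + ε) / (-Real.log (α + ε)) < μ - 1 ∧
        (Real.log (β + ε) - Real.log (α - ε)) / (-Real.log (α + ε)) < μ := by
      have hla : (0:ℝ) < -Real.log α := by linarith
      have hc1 : ContinuousAt (fun ε : ℝ => Real.log (β + ε) / (-Real.log (α + ε))) 0 := by
        apply ContinuousAt.div
        · exact ContinuousAt.log (by fun_prop) (by simp only [add_zero]; positivity)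
        · exact (ContinuousAt.log (by fun_prop) (by simp only [add_zero]; positivity)).neg
        · simp only [add_zero]
          exact neg_ne_zero.2 hlogα.ne
      have hc2 : ContinuousAt
          (fun ε : ℝ => (Real.log (β + ε) - Real.log (α - ε)) / (-Real.log (α + ε))) 0 := by
        apply ContinuousAt.div
        · exact (ContinuousAt.log (by fun_prop) (by simp only [add_zero]; positivity)).sub
            (ContinuousAt.log (by fun_prop) (by simp only [sub_zero]; positivity))
        · exact (ContinuousAt.log (by fun_prop) (by simp only [add_zero]; positivity)).neg
        · simp only [add_zero]
          exact neg_ne_zero.2 hlogα.ne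
      have hval1 : Real.log (β + 0) / (-Real.log (α + 0)) < μ - 1 := by
        simp only [add_zero]
        rw [div_neg]
        rw [hμ₀def] at hμ
        linarith
      have hval2 : (Real.log (β + 0) - Real.log (α - 0)) / (-Real.log (α + 0)) < μ := by
        simp only [add_zero, sub_zero]
        have : (Real.log β - Real.log α) / (-Real.log α) = 1 - Real.log β / Real.log α := by
          rw [div_neg, neg_eq_iff_eq_neg, sub_div, div_self hlogα.ne]
          ring
        rw [this]
        rw [hμ₀def] at hμ
        linarith
      have e1 := Tendsto.eventually_lt_const hval1 hc1.tendsto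
      have e2 := Tendsto.eventually_lt_const hval2 hc2.tendsto
      have e3 : ∀ᶠ ε : ℝ in 𝓝 0, ε < α := eventually_lt_nhds hα0
      have e4 : ∀ᶠ ε : ℝ in 𝓝 0, ε < 1 - α := eventually_lt_nhds (by linarith)
      have e0 : ∀ᶠ ε : ℝ in 𝓝[>] (0:ℝ), 0 < ε := eventually_mem_nhdsWithin
      obtain ⟨ε, ⟨⟨⟨h1, h2⟩, h3⟩, h4⟩, h0⟩ :=
        (((((e1.and e2).and e3).and e4).filter_mono nhdsWithin_le_nhds).and e0).exists
      exact ⟨ε, h0, h3, by linarith, h1, h2⟩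
    -- abbreviations
    set a : ℝ := α + ε with hadef
    set b : ℝ := β + ε with hbdef
    set c : ℝ := α - ε with hcdef
    have ha0 : 0 < a := by simp only [hadef]; linarith
    have ha1 : a < 1 := hεα1
    have hb1 : 1 < b := by simp only [hbdef]; linarith
    have hc0 : 0 < c := by simp only [hcdef]; linarith
    have hc1 : c < 1 := by simp only [hcdef]; linarith
    have hla : 0 < -Real.log a := by
      have := Real.log_neg ha0 ha1
      linarith
    have hlb : 0 < Real.log b := Real.log_pos hb1
    have hlan : Real.log a ≠ 0 := (neg_pos.1 hla).ne
    have hlc : Real.log c < 0 := Real.log_neg hc0 hc1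
    set s : ℝ := Real.log b / (-Real.log a) with hsdef
    set t : ℝ := (Real.log b - Real.log c) / (-Real.log a) with htdef
    have hd0 : 0 < Real.log b - Real.log c := by linarith
    have ht0 : 0 < t := by positivity
    -- eventual bounds on the sequences
    have hev : ∀ᶠ n : ℕ in atTop, c ^ n < |(u n : ℝ) * ξ - (v n : ℝ)| ∧
        |(u n : ℝ) * ξ - (v n : ℝ)| < a ^ n ∧ |(u n : ℝ)| ≤ b ^ n := by
      have h1 := hlim.eventually_const_lt (show c < α by simp only [hcdef]; linarith)
      have h2 := hlim.eventually_lt_const (show α < a by simp only [hadef]; linarith)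
      have h3 : ∀ᶠ n : ℕ in atTop, |(u n : ℝ)| ^ (1 / (n : ℝ)) < b := by
        have hlt : limsup (fun n => ((|(u n : ℝ)| ^ (1 / (n : ℝ)) : ℝ) : EReal)) atTop
            < (b : EReal) := lt_of_le_of_lt hsup (by exact_mod_cast (show β < b by simp only [hbdef]; linarith))
        filter_upwards [Filter.eventually_lt_of_limsup_lt hlt] with n hn
        exact_mod_cast hn
      filter_upwards [h1, h2, h3, eventually_ge_atTop 1] with n h1 h2 h3 hn1
      have hn0 : (n : ℝ) ≠ 0 := by positivity
      have hself : ∀ y : ℝ, 0 ≤ y → (y ^ (1 / (n : ℝ))) ^ n = y := by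
        intro y hy
        rw [← Real.rpow_natCast (y ^ (1 / (n : ℝ))) n, ← Real.rpow_mul hy,
          one_div, inv_mul_cancel₀ hn0, Real.rpow_one]
      refine ⟨?_, ?_, ?_⟩
      · calc c ^ n < (|(u n : ℝ) * ξ - (v n : ℝ)| ^ (1 / (n : ℝ))) ^ n :=
              pow_lt_pow_left₀ h1 hc0.le (by omega)
          _ = _ := hself _ (abs_nonneg _)
      · calc |(u n : ℝ) * ξ - (v n : ℝ)|
            = (|(u n : ℝ) * ξ - (v n : ℝ)| ^ (1 / (n : ℝ))) ^ n := (hself _ (abs_nonneg _)).symm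
          _ < a ^ n := pow_lt_pow_left₀ h2 (Real.rpow_nonneg (abs_nonneg _) _) (by omega)
      · calc |(u n : ℝ)|
            = (|(u n : ℝ)| ^ (1 / (n : ℝ))) ^ n := (hself _ (abs_nonneg _)).symm
          _ ≤ b ^ n := pow_le_pow_left₀ (Real.rpow_nonneg (abs_nonneg _) _) h3.le n
    obtain ⟨N, hN⟩ := eventually_atTop.1 hev
    -- eventual conditions on q
    have hlogq : Tendsto (fun q : ℕ => Real.log q) atTop atTop :=
      Real.tendsto_log_atTop.comp tendsto_natCast_atTop_atTop
    have hlog2q : Tendsto (fun q : ℕ => Real.log (2 * (q : ℝ)) / (-Real.log a)) atTop atTop := by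
      apply Tendsto.atTop_div_const hla
      exact Real.tendsto_log_atTop.comp
        ((tendsto_natCast_atTop_atTop (R := ℝ)).const_mul_atTop (by norm_num))
    have E2 : ∀ᶠ q : ℕ in atTop, (N : ℝ) ≤ Real.log (2 * (q : ℝ)) / (-Real.log a) :=
      hlog2q.eventually_ge_atTop _
    have E3 : ∀ᶠ q : ℕ in atTop,
        (s * Real.log 2 + Real.log b + Real.log 2) / (μ - 1 - s) < Real.log q :=
      hlogq.eventually_gt_atTop _
    have E4 : ∀ᶠ q : ℕ in atTop,
        (t * Real.log 2 + (Real.log b - Real.log c)) / (μ - t) < Real.log q :=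
      hlogq.eventually_gt_atTop _
    filter_upwards [eventually_ge_atTop 1, E2, E3, E4] with q hq1 hq2 hq3 hq4
    intro p
    by_contra hcon
    push_neg at hcon
    -- setup
    have hq0 : (0 : ℝ) < q := by exact_mod_cast hq1
    have hq0' : (q : ℝ) ≠ 0 := hq0.ne'
    have hqpow : (0 : ℝ) < (q : ℝ) ^ μ := Real.rpow_pos_of_pos hq0 μ
    set x : ℝ := Real.log (2 * (q : ℝ)) / (-Real.log a) with hxdef
    have hx0 : 0 ≤ x := le_trans (Nat.cast_nonneg N) hq2
    set n : ℕ := ⌊x⌋₊ + 1 with hndef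
    have hnN : N ≤ n := by
      have := Nat.le_floor (by exact_mod_cast hq2 : (N : ℝ) ≤ x)
      omega
    have hn1 : 1 ≤ n := by omega
    have hxn : x < (n : ℝ) := by
      have := Nat.lt_floor_add_one x
      push_cast [hndef]
      exact this
    have hnx : (n : ℝ) ≤ x + 1 := by
      have := Nat.floor_le hx0
      push_cast [hndef]
      linarith
    obtain ⟨hL1, hL2, hU⟩ := hN n hnN
    set L : ℝ := |(u n : ℝ) * ξ - (v n : ℝ)| with hLdef
    have hL0 : 0 < L := lt_trans (by positivity) hL1
    have hlog2 : (0:ℝ) < Real.log 2 := Real.log_pos (by norm_num)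
    have hlogqpos : 0 ≤ Real.log q := Real.log_natCast_nonneg q
    have hlog2q' : Real.log (2 * (q : ℝ)) = Real.log 2 + Real.log q :=
      Real.log_mul (by norm_num) hq0'
    -- a ^ n < 1 / (2 * q)
    have han : a ^ n < 1 / (2 * (q : ℝ)) := by
      have h1 : Real.log (2 * (q : ℝ)) < (n : ℝ) * (-Real.log a) := by
        have : x * (-Real.log a) < (n : ℝ) * (-Real.log a) :=
          mul_lt_mul_of_pos_right hxn hla
        rwa [hxdef, div_mul_cancel₀ _ hla.ne'] at this
      have h2 : Real.log (a ^ n) < Real.log (1 / (2 * (q : ℝ))) := by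
        rw [Real.log_pow, one_div, Real.log_inv]
        linarith
      have := Real.exp_lt_exp.2 h2
      rwa [Real.exp_log (by positivity), Real.exp_log (by positivity)] at this
    -- the integer D
    set D : ℤ := u n * p - (q : ℤ) * v n with hDdef
    have hid : ((D : ℤ) : ℝ) =
        (q : ℝ) * ((u n : ℝ) * ξ - (v n : ℝ)) - (u n : ℝ) * ((q : ℝ) * ξ - (p : ℝ)) := by
      push_cast [hDdef]
      ring
    have habsqp : |(q : ℝ) * ξ - (p : ℝ)| = (q : ℝ) * |ξ - (p : ℝ) / (q : ℝ)| := by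
      rw [← abs_of_pos hq0, ← abs_mul]
      congr 1
      field_simp
      rw [abs_of_pos hq0]
      ring
    by_cases hD : D = 0
    · -- rational approximation coincides with v n / u n
      have hu0 : u n ≠ 0 := by
        intro h0
        have hv0 : v n = 0 := by
          simp only [hDdef, h0, zero_mul, zero_sub, neg_eq_zero, mul_eq_zero] at hD
          rcases hD with h | h
          · exact absurd h (by exact_mod_cast hq0')
          · exact h
        rw [hLdef, h0, hv0] at hL0
        simp at hL0
      have hu0' : (0:ℝ) < |(u n : ℝ)| := by
        simp only [abs_pos]
        exact_mod_cast hu0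
      have heq : (q : ℝ) * L = |(u n : ℝ)| * ((q : ℝ) * |ξ - (p : ℝ) / (q : ℝ)|) := by
        have : (q : ℝ) * ((u n : ℝ) * ξ - (v n : ℝ)) = (u n : ℝ) * ((q : ℝ) * ξ - (p : ℝ)) := by
          have h0 : ((D : ℤ) : ℝ) = 0 := by rw [hD]; simp
          rw [h0] at hid
          linarith
        calc (q : ℝ) * L = |(q : ℝ) * ((u n : ℝ) * ξ - (v n : ℝ))| := by
              rw [hLdef, abs_mul, abs_of_pos hq0]
          _ = |(u n : ℝ)| * |(q : ℝ) * ξ - (p : ℝ)| := by rw [this, abs_mul]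
          _ = _ := by rw [habsqp]
      have heq2 : L = |(u n : ℝ)| * |ξ - (p : ℝ) / (q : ℝ)| := by
        refine mul_left_cancel₀ hq0' (heq.trans ?_)
        ring
      -- lower bound c^n < L ≤ b^n / q^μ
      have hkey : c ^ n < b ^ n * (1 / (q : ℝ) ^ μ) := by
        calc c ^ n < L := hL1
          _ = |(u n : ℝ)| * |ξ - (p : ℝ) / (q : ℝ)| := heq2
          _ ≤ b ^ n * (1 / (q : ℝ) ^ μ) :=
              mul_le_mul hU hcon (abs_nonneg _) (by positivity)
      -- take logs
      have hlogkey : (n : ℝ) * Real.log c < (n : ℝ) * Real.log b - μ * Real.log q := by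
        have h1 : Real.log (c ^ n) < Real.log (b ^ n * (1 / (q : ℝ) ^ μ)) :=
          Real.log_lt_log (by positivity) hkey
        rw [Real.log_pow, Real.log_mul (by positivity) (by positivity), Real.log_pow,
          one_div, Real.log_inv, Real.log_rpow hq0] at h1
        linarith
      have h2 : μ * Real.log q < ((x : ℝ) + 1) * (Real.log b - Real.log c) := by
        have h3 : (n : ℝ) * (Real.log b - Real.log c) ≤ (x + 1) * (Real.log b - Real.log c) :=
          mul_le_mul_of_nonneg_right hnx hd0.le
        have h4 : (n : ℝ) * (Real.log b - Real.log c)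
            = (n : ℝ) * Real.log b - (n : ℝ) * Real.log c := by ring
        linarith
      have hxt : x * (Real.log b - Real.log c) = (Real.log 2 + Real.log q) * t := by
        rw [hxdef, htdef, hlog2q']
        field_simp [hlan]
      have hfin : (μ - t) * Real.log q < t * Real.log 2 + (Real.log b - Real.log c) := by
        have h5 : (x + 1) * (Real.log b - Real.log c)
            = x * (Real.log b - Real.log c) + (Real.log b - Real.log c) := by ring
        have h6 : (Real.log 2 + Real.log q) * t = t * Real.log 2 + t * Real.log q := by ring
        have h7 : (μ - t) * Real.log q = μ * Real.log q - t * Real.log q := by ring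
        linarith
      have hμt : 0 < μ - t := by
        have : t < μ := by
          rw [htdef]
          exact ht
        linarith
      have h8 := (div_lt_iff₀ hμt).1 hq4
      have h9 : Real.log q * (μ - t) = (μ - t) * Real.log q := mul_comm _ _
      linarith
    · -- D ≠ 0
      have habsD : (1 : ℝ) ≤ |((D : ℤ) : ℝ)| := by
        rw [← Int.cast_abs]
        exact_mod_cast Int.one_le_abs hD
      have hbound : (1 : ℝ) ≤ (q : ℝ) * a ^ n + b ^ n * ((q : ℝ) * (1 / (q : ℝ) ^ μ)) := by
        calc (1 : ℝ) ≤ |((D : ℤ) : ℝ)| := habsD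
          _ ≤ (q : ℝ) * L + |(u n : ℝ)| * |(q : ℝ) * ξ - (p : ℝ)| := by
              rw [hid]
              refine le_trans (abs_sub _ _) ?_
              rw [abs_mul, abs_mul, abs_of_pos hq0]
          _ ≤ (q : ℝ) * a ^ n + b ^ n * ((q : ℝ) * (1 / (q : ℝ) ^ μ)) := by
              refine add_le_add (mul_le_mul_of_nonneg_left hL2.le hq0.le) ?_
              rw [habsqp]
              exact mul_le_mul hU (mul_le_mul_of_nonneg_left hcon hq0.le)
                (by positivity) (by positivity)
      have hhalf : (q : ℝ) * a ^ n < 1 / 2 := by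
        have := mul_lt_mul_of_pos_left han hq0
        rw [mul_one_div] at this
        calc (q : ℝ) * a ^ n < (q : ℝ) / (2 * q) := this
          _ = 1 / 2 := by
              rw [div_eq_div_iff (by positivity) (by norm_num : (2:ℝ) ≠ 0)]
              ring
      have hbn : (q : ℝ) ^ μ / (2 * (q : ℝ)) < b ^ n := by
        have h1 : (1:ℝ)/2 < b ^ n * ((q : ℝ) * (1 / (q : ℝ) ^ μ)) := by linarith
        have h2 : (q : ℝ) ^ μ / (2 * (q : ℝ))
            = 1 / (2 * ((q : ℝ) * (1 / (q : ℝ) ^ μ))) := by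
          rw [div_eq_div_iff (by positivity) (by positivity)]
          field_simp
        rw [h2, div_lt_iff₀ (by positivity)]
        have h3 : b ^ n * (2 * ((q : ℝ) * (1 / (q : ℝ) ^ μ)))
            = 2 * (b ^ n * ((q : ℝ) * (1 / (q : ℝ) ^ μ))) := by ring
        linarith
      -- take logs
      have hlogbn : μ * Real.log q - (Real.log 2 + Real.log q) < (n : ℝ) * Real.log b := by
        have h1 : Real.log ((q : ℝ) ^ μ / (2 * (q : ℝ))) < Real.log (b ^ n) :=
          Real.log_lt_log (by positivity) hbn
        rw [Real.log_pow, Real.log_div (by positivity) (by positivity),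
          Real.log_rpow hq0, hlog2q'] at h1
        exact h1
      have hnb : (n : ℝ) * Real.log b ≤ (x + 1) * Real.log b :=
        mul_le_mul_of_nonneg_right hnx hlb.le
      have hxs : x * Real.log b = (Real.log 2 + Real.log q) * s := by
        rw [hxdef, hsdef, hlog2q']
        field_simp [hlan]
      have hμs : 0 < μ - 1 - s := by
        have : s < μ - 1 := by rw [hsdef]; exact hs
        linarith
      have hfin : (μ - 1 - s) * Real.log q
          < s * Real.log 2 + Real.log b + Real.log 2 := by
        have h5 : (x + 1) * Real.log b = x * Real.log b + Real.log b := by ring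
        have h6 : (Real.log 2 + Real.log q) * s = s * Real.log 2 + s * Real.log q := by ring
        have h7 : (μ - 1 - s) * Real.log q
            = μ * Real.log q - Real.log q - s * Real.log q := by ring
        linarith
      have h8 := (div_lt_iff₀ hμs).1 hq3
      have h9 : Real.log q * (μ - 1 - s) = (μ - 1 - s) * Real.log q := mul_comm _ _
      linarith
  
  -- conclude
  by_contra h
  push_neg at h
  obtain ⟨x, hx1, hx2⟩ := EReal.lt_iff_exists_real_btwn.1 h
  have hx1' : μ₀ < x := by exact_mod_cast hx1
  have hmem : (x : EReal) ∈ {x : EReal | ∃ μ : ℝ, x = (μ : EReal) ∧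
      ∀ᶠ q : ℕ in atTop, ∀ p : ℤ, |ξ - (p : ℝ) / (q : ℝ)| > 1 / (q : ℝ) ^ μ} :=
    ⟨x, rfl, key x hx1'⟩
  exact absurd (sInf_le hmem) (not_le.2 hx2)
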